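/- For every facet τ of Λ_d and every vertex v ∈ up(τ) ∪ tail(τ), there exists a facet τ' of Λ_d with τ' ≻ τ in revlex order and τ − {v} ⊆ τ'. Explicitly, if v ∈ tail(τ) one may take τ' = (τ − v) ∪ Gap(τ), and if v ∈ up(τ) ∩ V_i one may take τ' = (τ − v) ∪ fgap(τ,i). -/
import Mathlib


open Finset

variable {V : Type*} [Fintype V] [LinearOrder V]

/-- Facets of `Λ_d`: `d`-subsets meeting the `i`-th color class in at most `a i` vertices.
The order `≻` of the paper is `>` here. -/
def IsFacet (c : V → ℕ) (a : ℕ → ℕ) (m d : ℕ) (τ : Finset V) : Prop :=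
  τ.card = d ∧ ∀ i ∈ Finset.range m, (τ.filter (fun v => c v = i)).card ≤ a i

/-- Revlex order on equal-size subsets. -/
def RevGT (S T : Finset V) : Prop :=
  ∃ v ∈ T, v ∉ S ∧ ∀ w, w < v → (w ∈ S ↔ w ∈ T)

/-- `up(τ)`. -/
def upF (c : V → ℕ) (a : ℕ → ℕ) (τ : Finset V) : Finset V :=
  τ.filter (fun v => (τ.filter (fun w => c w = c v)).card = a (c v) ∧
    ∃ g, c g = c v ∧ g ∉ τ ∧ v < g)

/-- `tail(τ)`. -/
def tailF (c : V → ℕ) (a : ℕ → ℕ) (τ : Finset V) : Finset V :=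
  τ.filter (fun v => ∃ g, g ∉ τ ∧ (τ.filter (fun w => c w = c g)).card < a (c g) ∧ v < g)

/-- Candidates for `Gap(τ)`: vertices in neither `τ` nor a full color class; `Gap(τ)` is the
`≻`-largest of these, i.e. the maximum. -/
def gapSet (c : V → ℕ) (a : ℕ → ℕ) (τ : Finset V) : Finset V :=
  Finset.univ.filter (fun w => w ∉ τ ∧ (τ.filter (fun u => c u = c w)).card < a (c w))

lemma swap_facet (c : V → ℕ) (a : ℕ → ℕ) (m d : ℕ)
    (τ : Finset V) (hτ : IsFacet c a m d τ) (v g : V) (hv : v ∈ τ) (hg : g ∉ τ)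
    (hok : c g = c v ∨ (τ.filter (fun w => c w = c g)).card < a (c g)) :
    IsFacet c a m d (insert g (τ.erase v)) := by
  classical
  obtain ⟨hcard, hfil⟩ := hτ
  have hd : 1 ≤ d := hcard ▸ card_pos.2 ⟨v, hv⟩
  constructor
  · rw [card_insert_of_notMem (by simp [hg]), card_erase_of_mem hv, hcard]
    omega
  · intro i hi
    have hfi := hfil i hi
    rw [filter_insert]
    by_cases hgi : c g = i
    · rw [if_pos hgi, card_insert_of_notMem (by simp [hg]), filter_erase]
      by_cases hvi : c v = i
      · have hvmem : v ∈ τ.filter (fun w => c w = i) := mem_filter.2 ⟨hv, hvi⟩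
        rw [card_erase_of_mem hvmem]
        have h1 : 1 ≤ (τ.filter (fun w => c w = i)).card := card_pos.2 ⟨v, hvmem⟩
        omega
      · rcases hok with h | h
        · exact absurd (h ▸ hgi) hvi
        · rw [erase_eq_of_notMem (by simp [hvi])]
          rw [hgi] at h
          omega
    · rw [if_neg hgi, filter_erase]
      exact le_trans card_erase_le hfi

lemma swap_revgt (τ : Finset V) (v g : V) (hv : v ∈ τ) (hg : g ∉ τ) (hlt : v < g) :
    RevGT (insert g (τ.erase v)) τ := by
  refine ⟨v, hv, ?_, ?_⟩
  · intro h
    rcases mem_insert.1 h with rfl | h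
    · exact hg hv
    · exact (mem_erase.1 h).1 rfl
  · intro w hw
    have hwg : w ≠ g := ne_of_lt (hw.trans hlt)
    have hwv : w ≠ v := ne_of_lt hw
    simp [mem_insert, mem_erase, hwg, hwv]

open Classical in
/-- For every facet `τ` of `Λ_d` and every `v ∈ up(τ) ∪ tail(τ)` there is a revlex-earlier
facet `τ' ≻ τ` with `τ - v ⊆ τ'`; explicitly one may take `τ' = (τ - v) ∪ Gap(τ)` when
`v ∈ tail(τ)`, and `τ' = (τ - v) ∪ fgap(τ, c v)` when `v ∈ up(τ)`. -/
theorem stmt2 (c : V → ℕ) (a : ℕ → ℕ) (m d : ℕ)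
    (horder : ∀ v w : V, c v < c w → w < v)
    (hc : ∀ v : V, c v < m)
    (ha : ∀ i, i < m → 0 < a i ∧ a i ≤ (Finset.univ.filter (fun v : V => c v = i)).card)
    (hd1 : 1 ≤ d) (hd2 : d ≤ ∑ i ∈ Finset.range m, a i) :
    ∀ τ : Finset V, IsFacet c a m d τ →
      (∀ v ∈ upF c a τ ∪ tailF c a τ,
        ∃ τ', IsFacet c a m d τ' ∧ RevGT τ' τ ∧ τ.erase v ⊆ τ') ∧
      (∀ v ∈ tailF c a τ, ∀ g, (gapSet c a τ).max = some g →
        IsFacet c a m d (insert g (τ.erase v)) ∧ RevGT (insert g (τ.erase v)) τ ∧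
          τ.erase v ⊆ insert g (τ.erase v)) ∧
      (∀ v ∈ upF c a τ, ∀ g, ((Finset.univ.filter (fun w : V => c w = c v)) \ τ).max = some g →
        IsFacet c a m d (insert g (τ.erase v)) ∧ RevGT (insert g (τ.erase v)) τ ∧
          τ.erase v ⊆ insert g (τ.erase v)) := by
  classical
  intro τ hτ
  have part2 : ∀ v ∈ tailF c a τ, ∀ g, (gapSet c a τ).max = some g →
      IsFacet c a m d (insert g (τ.erase v)) ∧ RevGT (insert g (τ.erase v)) τ ∧
        τ.erase v ⊆ insert g (τ.erase v) := by
    intro v hv g hgmax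
    obtain ⟨hvτ, g', hg'τ, hg'lt, hvg'⟩ := mem_filter.1 hv
    have hgmem := Finset.mem_of_max hgmax
    obtain ⟨-, hgτ, hglt⟩ := mem_filter.1 hgmem
    have hg'mem : g' ∈ gapSet c a τ := mem_filter.2 ⟨mem_univ _, hg'τ, hg'lt⟩
    have hg'g : g' ≤ g := Finset.le_max_of_eq hg'mem hgmax
    have hvg : v < g := lt_of_lt_of_le hvg' hg'g
    exact ⟨swap_facet c a m d τ hτ v g hvτ hgτ (Or.inr hglt),
      swap_revgt τ v g hvτ hgτ hvg, subset_insert _ _⟩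
  have part3 : ∀ v ∈ upF c a τ, ∀ g,
      ((Finset.univ.filter (fun w : V => c w = c v)) \ τ).max = some g →
      IsFacet c a m d (insert g (τ.erase v)) ∧ RevGT (insert g (τ.erase v)) τ ∧
        τ.erase v ⊆ insert g (τ.erase v) := by
    intro v hv g hgmax
    obtain ⟨hvτ, -, g', hg'c, hg'τ, hvg'⟩ := mem_filter.1 hv
    have hgmem := Finset.mem_of_max hgmax
    obtain ⟨hgf, hgτ⟩ := mem_sdiff.1 hgmem
    have hgc : c g = c v := (mem_filter.1 hgf).2
    have hg'mem : g' ∈ (Finset.univ.filter (fun w : V => c w = c v)) \ τ :=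
      mem_sdiff.2 ⟨mem_filter.2 ⟨mem_univ _, hg'c⟩, hg'τ⟩
    have hg'g : g' ≤ g := Finset.le_max_of_eq hg'mem hgmax
    have hvg : v < g := lt_of_lt_of_le hvg' hg'g
    exact ⟨swap_facet c a m d τ hτ v g hvτ hgτ (Or.inl hgc),
      swap_revgt τ v g hvτ hgτ hvg, subset_insert _ _⟩
  refine ⟨?_, part2, part3⟩
  intro v hv
  rcases mem_union.1 hv with hvu | hvt
  · obtain ⟨hvτ, -, g', hg'c, hg'τ, hvg'⟩ := mem_filter.1 hvu
    have hg'mem : g' ∈ (Finset.univ.filter (fun w : V => c w = c v)) \ τ :=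
      mem_sdiff.2 ⟨mem_filter.2 ⟨mem_univ _, hg'c⟩, hg'τ⟩
    obtain ⟨g, hgmax⟩ := Finset.max_of_mem hg'mem
    exact ⟨insert g (τ.erase v), part3 v hvu g hgmax⟩
  · obtain ⟨hvτ, g', hg'τ, hg'lt, hvg'⟩ := mem_filter.1 hvt
    have hg'mem : g' ∈ gapSet c a τ := mem_filter.2 ⟨mem_univ _, hg'τ, hg'lt⟩
    obtain ⟨g, hgmax⟩ := Finset.max_of_mem hg'mem
    exact ⟨insert g (τ.erase v), part2 v hvt g hgmax⟩
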